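/- arXiv:2601.11953 — 4 statements merged into one kernel-verified Lean document; each statement's English description precedes it below -/
import Mathlib

section
/- For arbitrary policies π' and π in a finite CMDP, J_C^{EI}(π') − J_C^{EI}(π) ≤ (1/(1-γ)) E_{s∼d^π, a∼π'}[A_C^{EI}(s,a|π) + (2γ ε^{EI}_{π'}/(1-γ)) D_TV(π'‖π)[s]], where ε^{EI}_{π'} = max_s |E_{a∼π'}[A_C^{EI}(s,a|π)]| and D_TV(π'‖π)[s] = (1/2)∑_a |π'(a|s) − π(a|s)|. -/
open Finset

lemma key_cancel {S A : Type*} [Fintype S] [Fintype A]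
    (γ : ℝ) (ρ : S → ℝ) (P : S → A → S → ℝ)
    (hP1 : ∀ s a, ∑ s', P s a s' = 1)
    (C : S → A → S → ℝ) (V : S → ℝ)
    (μ : S → A → ℝ) (hμ1 : ∀ s, ∑ a, μ s a = 1)
    (e : S → ℝ)
    (he : ∀ t, e t - γ * ∑ s, ∑ a, e s * μ s a * P s a t = (1 - γ) * ρ t) :
    ∑ s, e s * ∑ a, μ s a * ∑ s', P s a s' * (C s a s' + γ * V s' - V s)
      = (∑ s, e s * ∑ a, μ s a * ∑ s', P s a s' * C s a s')
        - (1 - γ) * ∑ t, ρ t * V t := by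
  have hVsum : ∑ t, (e t - γ * ∑ s, ∑ a, e s * μ s a * P s a t) * V t
      = (1 - γ) * ∑ t, ρ t * V t := by
    rw [Finset.mul_sum]
    exact Finset.sum_congr rfl fun t _ => by rw [he t]; ring
  set c : S → ℝ := fun s => ∑ a, μ s a * ∑ s', P s a s' * C s a s' with hc
  set W : S → ℝ := fun s => ∑ a, μ s a * ∑ s', P s a s' * V s' with hW
  have inner : ∀ s, (∑ a, μ s a * ∑ s', P s a s' * (C s a s' + γ * V s' - V s))
      = c s + γ * W s - V s := by
    intro s
    have h1 : ∀ a, ∑ s', P s a s' * (C s a s' + γ * V s' - V s)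
        = (∑ s', P s a s' * C s a s') + γ * (∑ s', P s a s' * V s') - V s := by
      intro a
      rw [show (∑ s', P s a s' * (C s a s' + γ * V s' - V s))
          = ∑ s', (P s a s' * C s a s' + γ * (P s a s' * V s') - P s a s' * V s) from
        Finset.sum_congr rfl fun s' _ => by ring]
      rw [Finset.sum_sub_distrib, Finset.sum_add_distrib, ← Finset.mul_sum, ← Finset.sum_mul,
        hP1 s a]
      ring
    simp_rw [h1]
    rw [show (∑ a, μ s a * ((∑ s', P s a s' * C s a s') + γ * (∑ s', P s a s' * V s') - V s))
        = ∑ a, (μ s a * (∑ s', P s a s' * C s a s')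
            + γ * (μ s a * ∑ s', P s a s' * V s') - μ s a * V s) from
      Finset.sum_congr rfl fun a _ => by ring]
    rw [Finset.sum_sub_distrib, Finset.sum_add_distrib, ← Finset.mul_sum, ← Finset.sum_mul,
      hμ1 s]
    simp [hc, hW]
  have swap : ∑ s, e s * W s = ∑ t, (∑ s, ∑ a, e s * μ s a * P s a t) * V t := by
    have h1 : ∀ s, e s * W s = ∑ a, ∑ t, e s * μ s a * P s a t * V t := by
      intro s
      rw [hW]; dsimp only
      rw [Finset.mul_sum]
      exact Finset.sum_congr rfl fun a _ => by
        rw [Finset.mul_sum, Finset.mul_sum]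
        exact Finset.sum_congr rfl fun t _ => by ring
    rw [Finset.sum_congr rfl fun s _ => h1 s]
    rw [show (∑ s, ∑ a, ∑ t, e s * μ s a * P s a t * V t)
        = ∑ s, ∑ t, ∑ a, e s * μ s a * P s a t * V t from
      Finset.sum_congr rfl fun s _ => Finset.sum_comm]
    rw [Finset.sum_comm]
    exact Finset.sum_congr rfl fun t _ => by
      rw [Finset.sum_mul]
      exact Finset.sum_congr rfl fun s _ => by rw [Finset.sum_mul]
  have lhs_eq : ∑ s, e s * ∑ a, μ s a * ∑ s', P s a s' * (C s a s' + γ * V s' - V s)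
      = (∑ s, e s * c s) + γ * (∑ s, e s * W s) - ∑ s, e s * V s := by
    rw [Finset.sum_congr rfl fun s _ => by rw [inner s]]
    rw [show (∑ s, e s * (c s + γ * W s - V s))
        = ∑ s, (e s * c s + γ * (e s * W s) - e s * V s) from
      Finset.sum_congr rfl fun s _ => by ring]
    rw [Finset.sum_sub_distrib, Finset.sum_add_distrib, ← Finset.mul_sum]
  rw [lhs_eq, swap]
  have hQ : ∑ t, e t * V t - γ * ∑ t, (∑ s, ∑ a, e s * μ s a * P s a t) * V t
      = (1 - γ) * ∑ t, ρ t * V t := by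
    rw [← hVsum, Finset.mul_sum, ← Finset.sum_sub_distrib]
    exact Finset.sum_congr rfl fun t _ => by ring
  linarith


lemma l1_bound {S A : Type*} [Fintype S] [Fintype A]
    (γ : ℝ) (hγ0 : 0 ≤ γ) (ρ : S → ℝ)
    (P : S → A → S → ℝ) (hP0 : ∀ s a s', 0 ≤ P s a s')
    (hP1 : ∀ s a, ∑ s', P s a s' = 1)
    (π π' : S → A → ℝ)
    (hπ'0 : ∀ s a, 0 ≤ π' s a) (hπ'1 : ∀ s, ∑ a, π' s a = 1)
    (d d' : S → ℝ) (hd0 : ∀ s, 0 ≤ d s)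
    (hd : ∀ t, d t - γ * ∑ s, ∑ a, d s * π s a * P s a t = (1 - γ) * ρ t)
    (hd' : ∀ t, d' t - γ * ∑ s, ∑ a, d' s * π' s a * P s a t = (1 - γ) * ρ t) :
    ∑ t, |d' t - d t| ≤ γ * (∑ t, |d' t - d t|)
      + γ * ∑ s, d s * ∑ a, |π' s a - π s a| := by
  have hΔ : ∀ t, d' t - d t
      = γ * ∑ s, ∑ a, ((d' s - d s) * π' s a + d s * (π' s a - π s a)) * P s a t := by
    intro t
    have h1 := hd t
    have h2 := hd' t
    have h3 : d' t - d t = γ * (∑ s, ∑ a, d' s * π' s a * P s a t)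
        - γ * (∑ s, ∑ a, d s * π s a * P s a t) := by linarith
    rw [h3, ← mul_sub, ← Finset.sum_sub_distrib]
    congr 1
    refine Finset.sum_congr rfl fun s _ => ?_
    rw [← Finset.sum_sub_distrib]
    exact Finset.sum_congr rfl fun a _ => by ring
  have step : ∀ t, |d' t - d t|
      ≤ γ * ∑ s, ∑ a, (|d' s - d s| * π' s a + d s * |π' s a - π s a|) * P s a t := by
    intro t
    rw [hΔ t, abs_mul, abs_of_nonneg hγ0]
    refine mul_le_mul_of_nonneg_left ?_ hγ0
    refine le_trans (Finset.abs_sum_le_sum_abs _ _) (Finset.sum_le_sum fun s _ => ?_)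
    refine le_trans (Finset.abs_sum_le_sum_abs _ _) (Finset.sum_le_sum fun a _ => ?_)
    rw [abs_mul, abs_of_nonneg (hP0 s a t)]
    refine mul_le_mul_of_nonneg_right ?_ (hP0 s a t)
    refine le_trans (abs_add_le _ _) ?_
    rw [abs_mul, abs_mul, abs_of_nonneg (hπ'0 s a), abs_of_nonneg (hd0 s)]
  calc ∑ t, |d' t - d t|
      ≤ ∑ t, γ * ∑ s, ∑ a, (|d' s - d s| * π' s a + d s * |π' s a - π s a|) * P s a t :=
        Finset.sum_le_sum fun t _ => step t
    _ = γ * ∑ s, ∑ a, (|d' s - d s| * π' s a + d s * |π' s a - π s a|) * (∑ t, P s a t) := by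
        rw [← Finset.mul_sum]
        congr 1
        rw [Finset.sum_comm]
        refine Finset.sum_congr rfl fun s _ => ?_
        rw [Finset.sum_comm]
        exact Finset.sum_congr rfl fun a _ => (Finset.mul_sum _ _ _).symm
    _ = γ * ∑ s, (|d' s - d s| + d s * ∑ a, |π' s a - π s a|) := by
        congr 1
        refine Finset.sum_congr rfl fun s _ => ?_
        rw [show (∑ a, (|d' s - d s| * π' s a + d s * |π' s a - π s a|) * (∑ t, P s a t))
            = ∑ a, (|d' s - d s| * π' s a + d s * |π' s a - π s a|) from
          Finset.sum_congr rfl fun a _ => by rw [hP1 s a, mul_one]]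
        rw [Finset.sum_add_distrib, ← Finset.mul_sum, ← Finset.mul_sum, hπ'1 s, mul_one]
    _ = γ * (∑ t, |d' t - d t|) + γ * ∑ s, d s * ∑ a, |π' s a - π s a| := by
        rw [Finset.sum_add_distrib, mul_add]



/-- Extrinsic-intrinsic constraint bound:
J_C^{EI}(π') − J_C^{EI}(π) ≤ (1/(1-γ)) E_{s∼d^π, a∼π'}[A_C^{EI}(s,a|π)
  + (2γ ε^{EI}_{π'}/(1-γ)) D_TV(π'‖π)[s]]. -/
theorem stmt_10 {S A : Type*} [Fintype S] [Fintype A] [Nonempty S]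
    (γ : ℝ) (hγ0 : 0 < γ) (hγ1 : γ < 1)
    (ρ : S → ℝ) (hρ0 : ∀ s, 0 ≤ ρ s) (hρ1 : ∑ s, ρ s = 1)
    (P : S → A → S → ℝ) (hP0 : ∀ s a s', 0 ≤ P s a s')
    (hP1 : ∀ s a, ∑ s', P s a s' = 1)
    (π π' : S → A → ℝ)
    (hπ0 : ∀ s a, 0 ≤ π s a) (hπ1 : ∀ s, ∑ a, π s a = 1)
    (hπ'0 : ∀ s a, 0 ≤ π' s a) (hπ'1 : ∀ s, ∑ a, π' s a = 1)
    -- extrinsic-intrinsic cost C^{EI} = c^E + β c^I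
    (C : S → A → S → ℝ)
    -- V is the extrinsic-intrinsic cost value function of π
    (V : S → ℝ)
    (hV : ∀ s, V s = ∑ a, π s a * ∑ s', P s a s' * (C s a s' + γ * V s'))
    -- discounted visitation distributions of π and π'
    (d d' : S → ℝ) (hd0 : ∀ s, 0 ≤ d s) (hd'0 : ∀ s, 0 ≤ d' s)
    (hd : ∀ t, d t - γ * ∑ s, ∑ a, d s * π s a * P s a t = (1 - γ) * ρ t)
    (hd' : ∀ t, d' t - γ * ∑ s, ∑ a, d' s * π' s a * P s a t
      = (1 - γ) * ρ t) :
    (1 / (1 - γ)) * (∑ s, d' s * ∑ a, π' s a * ∑ s', P s a s' * C s a s')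
        - (1 / (1 - γ)) * (∑ s, d s * ∑ a, π s a * ∑ s', P s a s' * C s a s')
      ≤ (1 / (1 - γ)) * ∑ s, d s * ∑ a, π' s a *
          ((∑ s', P s a s' * (C s a s' + γ * V s' - V s))
            + (2 * γ * (⨆ t : S, |∑ b, π' t b *
                ∑ s', P t b s' * (C t b s' + γ * V s' - V t)|) / (1 - γ))
              * ((1 / 2) * ∑ b, |π' s b - π s b|)) := by

  classical
  have h1γ : 0 < 1 - γ := by linarith
  set Ab : S → ℝ := fun s => ∑ a, π' s a * ∑ s', P s a s' * (C s a s' + γ * V s' - V s)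
    with hAb
  set ε : ℝ := ⨆ t : S, |Ab t| with hε_def
  have hε : ∀ s, |Ab s| ≤ ε := by
    intro s
    rw [hε_def]
    exact le_ciSup (Set.Finite.bddAbove (Set.finite_range fun t => |Ab t|)) s
  have hε0 : 0 ≤ ε := le_trans (abs_nonneg _) (hε (Classical.arbitrary S))
  set TV2 : ℝ := ∑ s, d s * ∑ a, |π' s a - π s a| with hTV2
  have hTV2nn : 0 ≤ TV2 := Finset.sum_nonneg fun s _ =>
    mul_nonneg (hd0 s) (Finset.sum_nonneg fun a _ => abs_nonneg _)
  -- key cancellation identities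
  have hA' := key_cancel γ ρ P hP1 C V π' hπ'1 d' hd'
  have hApi := key_cancel γ ρ P hP1 C V π hπ1 d hd
  have hzero : ∀ s, (∑ a, π s a * ∑ s', P s a s' * (C s a s' + γ * V s' - V s)) = 0 := by
    intro s
    have h1 : ∀ a : A, ∑ s', P s a s' * (C s a s' + γ * V s' - V s)
        = (∑ s', P s a s' * (C s a s' + γ * V s')) - V s := by
      intro a
      rw [show (∑ s', P s a s' * (C s a s' + γ * V s' - V s))
          = ∑ s', (P s a s' * (C s a s' + γ * V s') - P s a s' * V s) from
        Finset.sum_congr rfl fun s' _ => by ring]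
      rw [Finset.sum_sub_distrib, ← Finset.sum_mul, hP1 s a, one_mul]
    simp_rw [h1]
    rw [show (∑ a, π s a * ((∑ s', P s a s' * (C s a s' + γ * V s')) - V s))
        = ∑ a, (π s a * (∑ s', P s a s' * (C s a s' + γ * V s')) - π s a * V s) from
      Finset.sum_congr rfl fun a _ => by ring]
    rw [Finset.sum_sub_distrib, ← Finset.sum_mul, hπ1 s, one_mul, ← hV s, sub_self]
  have hJpi : (∑ s, d s * ∑ a, π s a * ∑ s', P s a s' * C s a s')
      = (1 - γ) * ∑ t, ρ t * V t := by
    have : ∑ s, d s * ∑ a, π s a * ∑ s', P s a s' * (C s a s' + γ * V s' - V s) = 0 := by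
      rw [Finset.sum_congr rfl fun s _ => by rw [hzero s]]
      simp
    rw [this] at hApi
    linarith
  have hdiff : (∑ s, d' s * ∑ a, π' s a * ∑ s', P s a s' * C s a s')
      - (∑ s, d s * ∑ a, π s a * ∑ s', P s a s' * C s a s')
      = ∑ s, d' s * Ab s := by
    rw [hAb]
    rw [hA', hJpi]
  -- ℓ1 bound
  have hl1 := l1_bound γ (le_of_lt hγ0) ρ P hP0 hP1 π π' hπ'0 hπ'1 d d' hd0 hd hd'
  have hl1' : ∑ t, |d' t - d t| ≤ γ / (1 - γ) * TV2 := by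
    rw [div_mul_eq_mul_div, le_div_iff₀ h1γ]
    nlinarith [hl1]
  -- step B
  have hstep : ∑ s, d' s * Ab s - ∑ s, d s * Ab s ≤ ε * ∑ t, |d' t - d t| := by
    rw [← Finset.sum_sub_distrib]
    calc ∑ s, (d' s * Ab s - d s * Ab s)
        ≤ ∑ s, |d' s - d s| * ε := Finset.sum_le_sum fun s _ => by
          calc d' s * Ab s - d s * Ab s = (d' s - d s) * Ab s := by ring
            _ ≤ |(d' s - d s) * Ab s| := le_abs_self _
            _ = |d' s - d s| * |Ab s| := abs_mul _ _
            _ ≤ |d' s - d s| * ε := mul_le_mul_of_nonneg_left (hε s) (abs_nonneg _)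
      _ = ε * ∑ t, |d' t - d t| := by rw [← Finset.sum_mul, mul_comm]
  have hmain : ∑ s, d' s * Ab s ≤ ∑ s, d s * Ab s + ε * (γ / (1 - γ) * TV2) := by
    have := mul_le_mul_of_nonneg_left hl1' hε0
    linarith
  -- RHS rewriting
  have hR : (∑ s, d s * ∑ a, π' s a *
        ((∑ s', P s a s' * (C s a s' + γ * V s' - V s))
          + (2 * γ * ε / (1 - γ)) * ((1 / 2) * ∑ b, |π' s b - π s b|)))
      = ∑ s, d s * Ab s + ε * (γ / (1 - γ) * TV2) := by
    have hper : ∀ s, (∑ a, π' s a *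
          ((∑ s', P s a s' * (C s a s' + γ * V s' - V s))
            + (2 * γ * ε / (1 - γ)) * ((1 / 2) * ∑ b, |π' s b - π s b|)))
        = Ab s + (2 * γ * ε / (1 - γ)) * ((1 / 2) * ∑ b, |π' s b - π s b|) := by
      intro s
      rw [show (∑ a, π' s a *
            ((∑ s', P s a s' * (C s a s' + γ * V s' - V s))
              + (2 * γ * ε / (1 - γ)) * ((1 / 2) * ∑ b, |π' s b - π s b|)))
          = ∑ a, (π' s a * (∑ s', P s a s' * (C s a s' + γ * V s' - V s))
              + π' s a * ((2 * γ * ε / (1 - γ)) * ((1 / 2) * ∑ b, |π' s b - π s b|))) from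
        Finset.sum_congr rfl fun a _ => by ring]
      rw [Finset.sum_add_distrib, ← Finset.sum_mul, hπ'1 s, one_mul, hAb]
    rw [Finset.sum_congr rfl fun s _ => by rw [hper s]]
    rw [show (∑ s, d s * (Ab s + (2 * γ * ε / (1 - γ)) * ((1 / 2) * ∑ b, |π' s b - π s b|)))
        = ∑ s, (d s * Ab s + (γ * ε / (1 - γ)) * (d s * ∑ b, |π' s b - π s b|)) from
      Finset.sum_congr rfl fun s _ => by ring]
    rw [Finset.sum_add_distrib, ← Finset.mul_sum, ← hTV2]
    ring
  -- conclude
  rw [← mul_sub]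
  have hgoal : (∑ s, d' s * ∑ a, π' s a * ∑ s', P s a s' * C s a s')
      - (∑ s, d s * ∑ a, π s a * ∑ s', P s a s' * C s a s')
      ≤ ∑ s, d s * ∑ a, π' s a *
          ((∑ s', P s a s' * (C s a s' + γ * V s' - V s))
            + (2 * γ * ε / (1 - γ)) * ((1 / 2) * ∑ b, |π' s b - π s b|)) := by
    rw [hdiff, hR]
    exact hmain
  exact mul_le_mul_of_nonneg_left hgoal (by positivity)
end

section
/- For two policies π and π' in a finite MDP with discount γ ∈ (0,1), the discounted visitation distributions satisfy ‖d^{π'} − d^π‖₁ ≤ (2γ/(1-γ)) E_{s∼d^π}[D_TV(π'‖π)[s]], where D_TV(π'‖π)[s] = (1/2)∑_a |π'(a|s) − π(a|s)|. -/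
/-- ‖d^{π'} − d^π‖₁ ≤ (2γ/(1-γ)) E_{s∼d^π}[D_TV(π'‖π)[s]]. -/
theorem stmt_11 {S A : Type*} [Fintype S] [Fintype A]
    (γ : ℝ) (hγ0 : 0 < γ) (hγ1 : γ < 1)
    (ρ : S → ℝ) (hρ0 : ∀ s, 0 ≤ ρ s) (hρ1 : ∑ s, ρ s = 1)
    (P : S → A → S → ℝ) (hP0 : ∀ s a s', 0 ≤ P s a s')
    (hP1 : ∀ s a, ∑ s', P s a s' = 1)
    (π π' : S → A → ℝ)
    (hπ0 : ∀ s a, 0 ≤ π s a) (hπ1 : ∀ s, ∑ a, π s a = 1)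
    (hπ'0 : ∀ s a, 0 ≤ π' s a) (hπ'1 : ∀ s, ∑ a, π' s a = 1)
    (d d' : S → ℝ) (hd0 : ∀ s, 0 ≤ d s) (hd'0 : ∀ s, 0 ≤ d' s)
    (hd : ∀ t, d t - γ * ∑ s, ∑ a, d s * π s a * P s a t = (1 - γ) * ρ t)
    (hd' : ∀ t, d' t - γ * ∑ s, ∑ a, d' s * π' s a * P s a t
      = (1 - γ) * ρ t) :
    ∑ s, |d' s - d s|
      ≤ (2 * γ / (1 - γ)) * ∑ s, d s * ((1 / 2) * ∑ a, |π' s a - π s a|) := by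
  set E := ∑ s, |d' s - d s| with hE
  set T := ∑ s, d s * ∑ a, |π' s a - π s a| with hTdef
  have habs : ∀ s a, |d' s * π' s a - d s * π s a|
      ≤ |d' s - d s| * π' s a + d s * |π' s a - π s a| := by
    intro s a
    have h : d' s * π' s a - d s * π s a
        = (d' s - d s) * π' s a + d s * (π' s a - π s a) := by ring
    rw [h]
    calc |(d' s - d s) * π' s a + d s * (π' s a - π s a)|
        ≤ |(d' s - d s) * π' s a| + |d s * (π' s a - π s a)| := abs_add_le _ _
      _ = |d' s - d s| * π' s a + d s * |π' s a - π s a| := by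
          rw [abs_mul, abs_mul, abs_of_nonneg (hπ'0 s a), abs_of_nonneg (hd0 s)]
  have step1 : ∀ t, |d' t - d t|
      ≤ γ * ∑ s, ∑ a, |d' s * π' s a - d s * π s a| * P s a t := by
    intro t
    have h1 : d' t - d t
        = γ * ∑ s, ∑ a, (d' s * π' s a - d s * π s a) * P s a t := by
      have h := hd t; have h' := hd' t
      have e : ∑ s, ∑ a, (d' s * π' s a - d s * π s a) * P s a t
          = (∑ s, ∑ a, d' s * π' s a * P s a t)
            - ∑ s, ∑ a, d s * π s a * P s a t := by
        rw [← Finset.sum_sub_distrib]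
        refine Finset.sum_congr rfl fun s _ => ?_
        rw [← Finset.sum_sub_distrib]
        exact Finset.sum_congr rfl fun a _ => by ring
      rw [e, mul_sub]
      linarith
    rw [h1, abs_mul, abs_of_nonneg hγ0.le]
    gcongr
    calc |∑ s, ∑ a, (d' s * π' s a - d s * π s a) * P s a t|
        ≤ ∑ s, |∑ a, (d' s * π' s a - d s * π s a) * P s a t| :=
          Finset.abs_sum_le_sum_abs _ _
      _ ≤ ∑ s, ∑ a, |(d' s * π' s a - d s * π s a) * P s a t| := by
          gcongr with s; exact Finset.abs_sum_le_sum_abs _ _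
      _ = ∑ s, ∑ a, |d' s * π' s a - d s * π s a| * P s a t := by
          refine Finset.sum_congr rfl fun s _ => Finset.sum_congr rfl fun a _ => ?_
          rw [abs_mul, abs_of_nonneg (hP0 s a t)]
  have key : E ≤ γ * E + γ * T := by
    calc E ≤ ∑ t, γ * ∑ s, ∑ a, |d' s * π' s a - d s * π s a| * P s a t :=
          Finset.sum_le_sum fun t _ => step1 t
      _ = γ * ∑ s, ∑ a, |d' s * π' s a - d s * π s a| := by
          rw [← Finset.mul_sum]
          congr 1
          rw [Finset.sum_comm]
          refine Finset.sum_congr rfl fun s _ => ?_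
          rw [Finset.sum_comm]
          refine Finset.sum_congr rfl fun a _ => ?_
          rw [← Finset.mul_sum, hP1 s a, mul_one]
      _ ≤ γ * ∑ s, (|d' s - d s| + d s * ∑ a, |π' s a - π s a|) := by
          gcongr γ * ?_
          refine Finset.sum_le_sum fun s _ => ?_
          calc ∑ a, |d' s * π' s a - d s * π s a|
              ≤ ∑ a, (|d' s - d s| * π' s a + d s * |π' s a - π s a|) :=
                Finset.sum_le_sum fun a _ => habs s a
            _ = |d' s - d s| + d s * ∑ a, |π' s a - π s a| := by
                rw [Finset.sum_add_distrib, ← Finset.mul_sum, ← Finset.mul_sum,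
                  hπ'1 s, mul_one]
      _ = γ * E + γ * T := by
          rw [Finset.sum_add_distrib, mul_add]
  have hhalf : ∑ s, d s * ((1 / 2) * ∑ a, |π' s a - π s a|) = (1 / 2) * T := by
    rw [hTdef, Finset.mul_sum]
    exact Finset.sum_congr rfl fun s _ => by ring
  rw [hhalf, div_mul_eq_mul_div, le_div_iff₀ (by linarith : (0:ℝ) < 1 - γ)]
  nlinarith [key]
end

section
/- Let f : ℝⁿ → ℝᵐ be a linear map given by a random matrix whose entries are i.i.d. N(0, 1/m). For any fixed pair x, y ∈ ℝⁿ and any ε ∈ (0,1), the probability that (1-ε)‖x−y‖² ≤ ‖f(x)−f(y)‖² ≤ (1+ε)‖x−y‖² fails is at most 2 exp(−m(ε²/4 − ε³/6)). -/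
open MeasureTheory ProbabilityTheory

section JLAux
open Real




lemma jl_gauss_sq_integral (v : NNReal) (t d : ℝ) (h : 2 * t * v < 1) :
    ∫⁻ x, ENNReal.ofReal (rexp (t * (x + d) ^ 2)) ∂(gaussianReal 0 v)
      = ENNReal.ofReal ((Real.sqrt (1 - 2 * t * v))⁻¹ * rexp (t * d ^ 2 / (1 - 2 * t * v))) := by
  by_cases hv : v = 0
  · subst hv
    simp only [NNReal.coe_zero, mul_zero, sub_zero, gaussianReal_zero_var, lintegral_dirac,
      Real.sqrt_one, inv_one, one_mul, zero_add, div_one]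
  · have hvpos : (0:ℝ) < v := lt_of_le_of_ne v.2 (by exact_mod_cast Ne.symm hv)
    set A : ℝ := (1 - 2 * t * v) / (2 * v) with hA
    have hden : (0:ℝ) < 1 - 2 * t * v := by linarith
    have hApos : 0 < A := div_pos hden (by linarith)
    set B : ℝ := t * d / A with hB
    set C : ℝ := t * d ^ 2 / (1 - 2 * t * v) with hC
    have hexp : ∀ x : ℝ, rexp (t * (x + d) ^ 2) * gaussianPDFReal 0 v x
        = (Real.sqrt (2 * π * v))⁻¹ * (rexp C * rexp (-A * (x - B) ^ 2)) := by
      intro x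
      rw [gaussianPDFReal]
      rw [mul_comm (rexp _), mul_assoc, ← Real.exp_add, ← Real.exp_add]
      congr 2
      have hAne : A ≠ 0 := ne_of_gt hApos
      have hdne : (1 - 2 * t * v) ≠ 0 := ne_of_gt hden
      rw [hB, hC, hA]
      have hvne : (v:ℝ) ≠ 0 := hvpos.ne'
      generalize hw : 1 - 2 * t * (v:ℝ) = w at hdne ⊢
      have ht : t = (1 - w) / (2 * v) := by rw [← hw]; field_simp; ring
      rw [ht]
      field_simp
      ring
    -- Bochner integral value
    have hint : Integrable (fun x => rexp (t * (x + d) ^ 2) * gaussianPDFReal 0 v x) := by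
      have : Integrable (fun x => rexp (-A * x ^ 2)) := integrable_exp_neg_mul_sq hApos
      have h2 : Integrable (fun x => rexp (-A * (x - B) ^ 2)) := this.comp_sub_right B
      have h3 := (h2.const_mul (rexp C)).const_mul (Real.sqrt (2 * π * v))⁻¹
      refine h3.congr ?_
      filter_upwards with x
      rw [hexp x, mul_assoc]
    have hval : ∫ x, rexp (t * (x + d) ^ 2) * gaussianPDFReal 0 v x
        = (Real.sqrt (1 - 2 * t * v))⁻¹ * rexp C := by
      calc ∫ x, rexp (t * (x + d) ^ 2) * gaussianPDFReal 0 v x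
          = ∫ x, (Real.sqrt (2 * π * v))⁻¹ * (rexp C * rexp (-A * (x - B) ^ 2)) := by
            exact integral_congr_ae (Filter.Eventually.of_forall hexp)
        _ = (Real.sqrt (2 * π * v))⁻¹ * (rexp C * ∫ x, rexp (-A * (x - B) ^ 2)) := by
            rw [integral_const_mul, integral_const_mul]
        _ = (Real.sqrt (2 * π * v))⁻¹ * (rexp C * ∫ x, rexp (-A * x ^ 2)) := by
            rw [integral_sub_right_eq_self (fun x => rexp (-A * x ^ 2)) B]
        _ = (Real.sqrt (2 * π * v))⁻¹ * (rexp C * Real.sqrt (π / A)) := by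
            rw [integral_gaussian]
        _ = (Real.sqrt (1 - 2 * t * v))⁻¹ * rexp C := by
            have h1 : π / A = (2 * π * v) / (1 - 2 * t * v) := by
              rw [hA]
              field_simp
            rw [h1, Real.sqrt_div (by positivity)]
            have h2 : Real.sqrt (2 * π * v) ≠ 0 := by positivity
            field_simp
    -- convert to lintegral
    rw [gaussianReal_of_var_ne_zero _ hv]
    rw [lintegral_withDensity_eq_lintegral_mul _ (measurable_gaussianPDF _ _)
      (by fun_prop)]
    have heq : (fun x => gaussianPDF 0 v x * ENNReal.ofReal (rexp (t * (x + d) ^ 2)))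
        = fun x => ENNReal.ofReal (rexp (t * (x + d) ^ 2) * gaussianPDFReal 0 v x) := by
      funext x
      rw [gaussianPDF, ← ENNReal.ofReal_mul (gaussianPDFReal_nonneg 0 v x), mul_comm]
    calc ∫⁻ x, (gaussianPDF 0 v * fun x => ENNReal.ofReal (rexp (t * (x + d) ^ 2))) x
        = ∫⁻ x, ENNReal.ofReal (rexp (t * (x + d) ^ 2) * gaussianPDFReal 0 v x) := by
          rw [← heq]; rfl
      _ = ENNReal.ofReal (∫ x, rexp (t * (x + d) ^ 2) * gaussianPDFReal 0 v x) := by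
          rw [← ofReal_integral_eq_lintegral_ofReal hint]
          filter_upwards with x
          exact mul_nonneg (Real.exp_nonneg _) (gaussianPDFReal_nonneg 0 v x)
      _ = _ := by rw [hval]



variable {Ω : Type*} [MeasurableSpace Ω] {μ : Measure Ω}

lemma jl_iIndepFun_precomp {ι ι' : Type*} [Nonempty ι'] (g : ι' → ι)
    (hg : Function.Injective g) {f : ι → Ω → ℝ}
    (h : iIndepFun f μ) :
    iIndepFun (fun j => f (g j)) μ := by
  rw [iIndepFun_iff_measure_inter_preimage_eq_mul]
  intro S sets hsets
  classical
  have key := h.measure_inter_preimage_eq_mul (S.image g)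
    (sets := fun i => sets (Function.invFun g i))
    (fun i hi => by
      obtain ⟨j, hj, rfl⟩ := Finset.mem_image.1 hi
      simp only [Function.leftInverse_invFun hg j]
      exact hsets j hj)
  rw [Finset.prod_image (fun a _ b _ hab => hg hab)] at key
  have h1 : (⋂ i ∈ S.image g, f i ⁻¹' sets (Function.invFun g i))
      = ⋂ j ∈ S, f (g j) ⁻¹' sets j := by
    ext ω
    simp only [Set.mem_iInter, Finset.mem_image]
    constructor
    · intro hh j hj
      have := hh (g j) ⟨j, hj, rfl⟩
      rwa [Function.leftInverse_invFun hg] at this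
    · rintro hh i ⟨j, hj, rfl⟩
      rw [Function.leftInverse_invFun hg]
      exact hh j hj
  rw [h1] at key
  rw [key]
  refine Finset.prod_congr rfl fun j hj => ?_
  simp only [Function.leftInverse_invFun hg j]

lemma jl_lintegral_exp_sq_sum {ι : Type*} [IsProbabilityMeasure μ]
    (G : ι → Ω → ℝ) (v : ι → NNReal) (hGmeas : ∀ j, Measurable (G j))
    (hGindep : iIndepFun G μ)
    (hGlaw : ∀ j, μ.map (G j) = gaussianReal 0 (v j)) (s : Finset ι) :
    ∀ t : ℝ, 2 * t * (∑ j ∈ s, (v j : ℝ)) < 1 →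
    ∫⁻ ω, ENNReal.ofReal (rexp (t * (∑ j ∈ s, G j ω) ^ 2)) ∂μ
      = ENNReal.ofReal ((Real.sqrt (1 - 2 * t * (∑ j ∈ s, (v j : ℝ))))⁻¹) := by
  classical
  induction s using Finset.induction_on with
  | empty =>
    intro t ht
    simp
  | @insert a s ha ih =>
    intro t ht
    rw [Finset.sum_insert ha] at ht ⊢
    set V := ∑ j ∈ s, (v j : ℝ) with hVdef
    have hV : 0 ≤ V := Finset.sum_nonneg fun j _ => (v j).2
    have hva : (0:ℝ) ≤ v a := (v a).2
    have h1 : 2 * t * (v a : ℝ) < 1 := by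
      rcases le_or_gt t 0 with h | h
      · nlinarith
      · nlinarith
    have hden : 0 < 1 - 2 * t * (v a : ℝ) := by linarith
    set t' := t / (1 - 2 * t * (v a : ℝ)) with ht'def
    have ht' : 2 * t' * V < 1 := by
      rw [ht'def]
      rw [show 2 * (t / (1 - 2 * t * (v a : ℝ))) * V = (2 * t * V) / (1 - 2 * t * (v a : ℝ))
        by ring, div_lt_one hden]
      linarith
    have hT : Measurable (fun ω => ∑ j ∈ s, G j ω) :=
      Finset.measurable_sum _ fun j _ => hGmeas j
    have hTG : IndepFun (G a) (fun ω => ∑ j ∈ s, G j ω) μ := by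
      have h := hGindep.indepFun_finsetSum_of_notMem hGmeas ha
      have h2 : (fun ω => ∑ j ∈ s, G j ω) = ∑ j ∈ s, G j := by
        funext ω; simp
      rw [h2]
      exact h.symm
    have hmap : μ.map (fun ω => (G a ω, ∑ j ∈ s, G j ω))
        = (μ.map (G a)).prod (μ.map fun ω => ∑ j ∈ s, G j ω) :=
      (indepFun_iff_map_prod_eq_prod_map_map (hGmeas a).aemeasurable
        hT.aemeasurable).1 hTG
    have hF : Measurable (fun p : ℝ × ℝ => ENNReal.ofReal (rexp (t * (p.1 + p.2) ^ 2))) := by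
      fun_prop
    have hconst : ((Real.sqrt (1 - 2 * t * (v a : ℝ)))⁻¹ : ℝ) ≤ 1 ∨ True := Or.inr trivial
    calc ∫⁻ ω, ENNReal.ofReal (rexp (t * (∑ j ∈ insert a s, G j ω) ^ 2)) ∂μ
        = ∫⁻ ω, ENNReal.ofReal (rexp (t * (G a ω + ∑ j ∈ s, G j ω) ^ 2)) ∂μ := by
          refine lintegral_congr fun ω => ?_
          rw [Finset.sum_insert ha]
      _ = ∫⁻ p, ENNReal.ofReal (rexp (t * (p.1 + p.2) ^ 2))
            ∂(μ.map (fun ω => (G a ω, ∑ j ∈ s, G j ω))) := by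
          rw [lintegral_map hF ((hGmeas a).prodMk hT)]
      _ = ∫⁻ z, ∫⁻ x, ENNReal.ofReal (rexp (t * (x + z) ^ 2))
            ∂(μ.map (G a)) ∂(μ.map fun ω => ∑ j ∈ s, G j ω) := by
          rw [hmap, lintegral_prod_symm' _ hF]
      _ = ∫⁻ z, ENNReal.ofReal ((Real.sqrt (1 - 2 * t * (v a : ℝ)))⁻¹)
            * ENNReal.ofReal (rexp (t' * z ^ 2)) ∂(μ.map fun ω => ∑ j ∈ s, G j ω) := by
          refine lintegral_congr fun z => ?_
          rw [hGlaw a, jl_gauss_sq_integral (v a) t z h1,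
            ENNReal.ofReal_mul (by positivity)]
          congr 3
          rw [ht'def]; ring
      _ = ENNReal.ofReal ((Real.sqrt (1 - 2 * t * (v a : ℝ)))⁻¹)
            * ∫⁻ ω, ENNReal.ofReal (rexp (t' * (∑ j ∈ s, G j ω) ^ 2)) ∂μ := by
          rw [lintegral_const_mul' _ _ ENNReal.ofReal_ne_top,
            lintegral_map (by fun_prop) hT]
      _ = ENNReal.ofReal ((Real.sqrt (1 - 2 * t * (v a : ℝ)))⁻¹)
            * ENNReal.ofReal ((Real.sqrt (1 - 2 * t' * V))⁻¹) := by
          rw [ih t' ht']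
      _ = ENNReal.ofReal ((Real.sqrt (1 - 2 * t * ((v a : ℝ) + V)))⁻¹) := by
          rw [← ENNReal.ofReal_mul (by positivity), ← mul_inv,
            ← Real.sqrt_mul hden.le]
          congr 3
          rw [ht'def]
          field_simp
          ring

set_option maxHeartbeats 1000000 in
lemma jl_indep_row_sum {m n : ℕ} (M : Ω → Matrix (Fin m) (Fin n) ℝ)
    (hMmeas : ∀ i j, Measurable (fun ω => M ω i j))
    (hMindep : iIndepFun
      (fun (p : Fin m × Fin n) ω => M ω p.1 p.2) μ)
    (c : Fin n → ℝ) (s : Finset (Fin m)) (a : Fin m) (ha : a ∉ s) :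
    IndepFun (fun ω => ∑ j, M ω a j * c j)
      (fun ω => ∑ i ∈ s, (∑ j, M ω i j * c j) ^ 2) μ := by
  classical
  set S : Finset (Fin m × Fin n) := {a} ×ˢ Finset.univ with hS
  set T : Finset (Fin m × Fin n) := s ×ˢ Finset.univ with hT
  have hdisj : Disjoint S T := by
    rw [Finset.disjoint_left]
    rintro ⟨i, j⟩ hiS hiT
    rw [hS, Finset.mem_product, Finset.mem_singleton] at hiS
    rw [hT, Finset.mem_product] at hiT
    exact ha (hiS.1 ▸ hiT.1)
  have h := hMindep.indepFun_finset S T hdisj (fun p => hMmeas p.1 p.2)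
  have hmem1 : ∀ j : Fin n, (a, j) ∈ S := fun j => by
    rw [hS, Finset.mem_product]
    exact ⟨Finset.mem_singleton_self a, Finset.mem_univ j⟩
  have hmem2 : ∀ (i : {x // x ∈ s}) (j : Fin n), ((i : Fin m), j) ∈ T := fun i j => by
    rw [hT, Finset.mem_product]
    exact ⟨i.2, Finset.mem_univ j⟩
  set φ : ({p // p ∈ S} → ℝ) → ℝ := fun u => ∑ j, u ⟨(a, j), hmem1 j⟩ * c j with hφ
  set ψ : ({p // p ∈ T} → ℝ) → ℝ :=
    fun u => ∑ i ∈ s.attach, (∑ j, u ⟨((i : Fin m), j), hmem2 i j⟩ * c j) ^ 2 with hψ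
  have hφm : Measurable φ := by
    apply Finset.measurable_sum
    intro j _
    exact (measurable_pi_apply _).mul_const _
  have hψm : Measurable ψ := by
    apply Finset.measurable_sum
    intro i _
    apply Measurable.pow_const
    apply Finset.measurable_sum
    intro j _
    exact (measurable_pi_apply _).mul_const _
  have h2 := h.comp hφm hψm
  have e1 : (φ ∘ fun ω (p : {p // p ∈ S}) => M ω (p : Fin m × Fin n).1 (p : Fin m × Fin n).2)
      = fun ω => ∑ j, M ω a j * c j := by
    funext ω
    simp only [Function.comp_apply, hφ]
  have e2 : (ψ ∘ fun ω (p : {p // p ∈ T}) => M ω (p : Fin m × Fin n).1 (p : Fin m × Fin n).2)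
      = fun ω => ∑ i ∈ s, (∑ j, M ω i j * c j) ^ 2 := by
    funext ω
    simp only [Function.comp_apply, hψ]
    rw [← Finset.sum_attach s (fun i => (∑ j, M ω i j * c j) ^ 2)]
  rw [e1, e2] at h2
  exact h2

lemma jl_factor {m n : ℕ} [IsProbabilityMeasure μ] (M : Ω → Matrix (Fin m) (Fin n) ℝ)
    (hMmeas : ∀ i j, Measurable (fun ω => M ω i j))
    (hMindep : iIndepFun
      (fun (p : Fin m × Fin n) ω => M ω p.1 p.2) μ)
    (c : Fin n → ℝ) (t : ℝ) (s : Finset (Fin m)) :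
    ∫⁻ ω, ENNReal.ofReal (rexp (t * ∑ i ∈ s, (∑ j, M ω i j * c j) ^ 2)) ∂μ
      = ∏ i ∈ s, ∫⁻ ω, ENNReal.ofReal (rexp (t * (∑ j, M ω i j * c j) ^ 2)) ∂μ := by
  classical
  induction s using Finset.induction_on with
  | empty => simp
  | @insert a s ha ih =>
    have hptw : ∀ ω, ENNReal.ofReal (rexp (t * ∑ i ∈ insert a s, (∑ j, M ω i j * c j) ^ 2))
        = ENNReal.ofReal (rexp (t * (∑ j, M ω a j * c j) ^ 2))
          * ENNReal.ofReal (rexp (t * ∑ i ∈ s, (∑ j, M ω i j * c j) ^ 2)) := by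
      intro ω
      rw [← ENNReal.ofReal_mul (Real.exp_nonneg _), ← Real.exp_add,
        Finset.sum_insert ha, mul_add]
    have hindep2 : IndepFun
        (fun ω => ENNReal.ofReal (rexp (t * (∑ j, M ω a j * c j) ^ 2)))
        (fun ω => ENNReal.ofReal (rexp (t * ∑ i ∈ s, (∑ j, M ω i j * c j) ^ 2))) μ := by
      have h := jl_indep_row_sum M hMmeas hMindep c s a ha
      exact h.comp (φ := fun x : ℝ => ENNReal.ofReal (rexp (t * x ^ 2)))
        (ψ := fun x : ℝ => ENNReal.ofReal (rexp (t * x))) (by fun_prop) (by fun_prop)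
    calc ∫⁻ ω, ENNReal.ofReal (rexp (t * ∑ i ∈ insert a s, (∑ j, M ω i j * c j) ^ 2)) ∂μ
        = ∫⁻ ω, ENNReal.ofReal (rexp (t * (∑ j, M ω a j * c j) ^ 2))
            * ENNReal.ofReal (rexp (t * ∑ i ∈ s, (∑ j, M ω i j * c j) ^ 2)) ∂μ :=
          lintegral_congr hptw
      _ = (∫⁻ ω, ENNReal.ofReal (rexp (t * (∑ j, M ω a j * c j) ^ 2)) ∂μ)
            * ∫⁻ ω, ENNReal.ofReal (rexp (t * ∑ i ∈ s, (∑ j, M ω i j * c j) ^ 2)) ∂μ := by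
          apply lintegral_mul_eq_lintegral_mul_lintegral_of_indepFun _ _ hindep2
          · fun_prop
          · fun_prop
      _ = _ := by rw [ih, Finset.prod_insert ha]

lemma jl_row_mgf {m n : ℕ} [IsProbabilityMeasure μ] (hm : 0 < m) (hn : 0 < n)
    (M : Ω → Matrix (Fin m) (Fin n) ℝ)
    (hMmeas : ∀ i j, Measurable (fun ω => M ω i j))
    (hMindep : iIndepFun
      (fun (p : Fin m × Fin n) ω => M ω p.1 p.2) μ)
    (hMgauss : ∀ i j, Measure.map (fun ω => M ω i j) μ = gaussianReal 0 (1 / (m : NNReal)))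
    (c : Fin n → ℝ) (i : Fin m) (t : ℝ)
    (ht : 2 * t * ((∑ j, c j ^ 2) / m) < 1) :
    ∫⁻ ω, ENNReal.ofReal (rexp (t * (∑ j, M ω i j * c j) ^ 2)) ∂μ
      = ENNReal.ofReal ((Real.sqrt (1 - 2 * t * ((∑ j, c j ^ 2) / m)))⁻¹) := by
  haveI : Nonempty (Fin n) := ⟨⟨0, hn⟩⟩
  set v : Fin n → NNReal := fun j => ⟨c j ^ 2, sq_nonneg _⟩ * (1 / (m : NNReal)) with hv
  set G : Fin n → Ω → ℝ := fun j ω => M ω i j * c j with hG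
  have hGmeas : ∀ j, Measurable (G j) := fun j => (hMmeas i j).mul_const _
  have hGindep : iIndepFun G μ := by
    have h1 := jl_iIndepFun_precomp (fun j : Fin n => ((i, j) : Fin m × Fin n))
      (fun j k h => by simpa using h) hMindep
    have h2 := h1.comp (fun j x => x * c j) (fun j => measurable_mul_const _)
    exact h2
  have hGlaw : ∀ j, μ.map (G j) = gaussianReal 0 (v j) := by
    intro j
    have he : G j = (fun x => c j * x) ∘ (fun ω => M ω i j) := by
      funext ω
      simp [hG, mul_comm]
    rw [he, ← Measure.map_map (measurable_const_mul _) (hMmeas i j), hMgauss i j,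
      gaussianReal_map_const_mul (c j), mul_zero]
    rfl
  have hsum : ∑ j, ((v j : NNReal) : ℝ) = (∑ j, c j ^ 2) / m := by
    rw [Finset.sum_div]
    exact Finset.sum_congr rfl fun j _ => (NNReal.coe_mul _ _).trans (by simp [hv, div_eq_mul_inv]; left; rfl)
  have key := jl_lintegral_exp_sq_sum G v hGmeas hGindep hGlaw Finset.univ t
    (by rw [hsum]; exact ht)
  rw [hsum] at key
  exact key

lemma jl_log_ineq1 {ε : ℝ} (h0 : 0 ≤ ε) : Real.log (1 + ε) ≤ ε - ε ^ 2 / 2 + ε ^ 3 / 3 := by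
  set f : ℝ → ℝ := fun u => u - u ^ 2 / 2 + u ^ 3 / 3 - Real.log (1 + u) with hf
  have hder : ∀ u : ℝ, 0 < u → HasDerivAt f (1 - u + u ^ 2 - 1 / (1 + u)) u := by
    intro u hu
    have h1 : (0:ℝ) < 1 + u := by linarith
    have hlog : HasDerivAt (fun u : ℝ => Real.log (1 + u)) (1 / (1 + u)) u := by
      have h2 : HasDerivAt (fun u : ℝ => 1 + u) 1 u := by
        simpa using (hasDerivAt_id u).const_add (1:ℝ)
      simpa using h2.log h1.ne'
    have hpoly : HasDerivAt (fun u : ℝ => u - u ^ 2 / 2 + u ^ 3 / 3) (1 - u + u ^ 2) u := by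
      have h2 := ((hasDerivAt_pow 2 u).div_const 2)
      have h3 := ((hasDerivAt_pow 3 u).div_const 3)
      have := ((hasDerivAt_id u).sub h2).add h3
      refine this.congr_deriv ?_
      push_cast
      ring
    exact hpoly.sub hlog
  have hcont : ContinuousOn f (Set.Ici 0) := by
    intro u hu
    have h1 : (0:ℝ) < 1 + u := by
      have := Set.mem_Ici.1 hu; linarith
    apply ContinuousAt.continuousWithinAt
    have hlc : ContinuousAt (fun u : ℝ => Real.log (1 + u)) u :=
      (Real.continuousAt_log h1.ne').comp (by fun_prop)
    exact ContinuousAt.sub (by fun_prop) hlc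
  have hmono : MonotoneOn f (Set.Ici 0) := by
    apply monotoneOn_of_deriv_nonneg (convex_Ici 0) hcont
    · intro x hx
      rw [interior_Ici] at hx
      exact ((hder x hx).differentiableAt).differentiableWithinAt
    · intro x hx
      rw [interior_Ici] at hx
      rw [(hder x hx).deriv]
      have h1 : (0:ℝ) < 1 + x := by linarith [Set.mem_Ioi.1 hx]
      have h2 : 1 / (1 + x) ≤ 1 - x + x ^ 2 := by
        rw [div_le_iff₀ h1]
        nlinarith [Set.mem_Ioi.1 hx]
      linarith
  have h := hmono (Set.mem_Ici.2 le_rfl) (Set.mem_Ici.2 h0) h0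
  have hf0 : f 0 = 0 := by simp [hf]
  rw [hf0, hf] at h
  simp only at h
  linarith

lemma jl_log_ineq2 {ε : ℝ} (h0 : 0 ≤ ε) (h1 : ε < 1) :
    Real.log (1 - ε) ≤ -ε - ε ^ 2 / 2 := by
  set f : ℝ → ℝ := fun u => -u - u ^ 2 / 2 - Real.log (1 - u) with hf
  have hder : ∀ u : ℝ, u ∈ Set.Ioo (0:ℝ) 1 → HasDerivAt f (-1 - u + 1 / (1 - u)) u := by
    intro u hu
    have hd : (0:ℝ) < 1 - u := by linarith [hu.2]
    have hlog : HasDerivAt (fun u : ℝ => Real.log (1 - u)) (-(1 / (1 - u))) u := by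
      have h2 : HasDerivAt (fun u : ℝ => 1 - u) (-1) u := by
        simpa using ((hasDerivAt_id u).const_sub (1:ℝ))
      have := h2.log hd.ne'
      convert this using 1
      field_simp
    have hpoly : HasDerivAt (fun u : ℝ => -u - u ^ 2 / 2) (-1 - u) u := by
      have h2 := ((hasDerivAt_pow 2 u).div_const 2)
      have := ((hasDerivAt_id u).neg).sub h2
      refine this.congr_deriv ?_
      push_cast
      ring
    have := hpoly.sub hlog
    refine this.congr_deriv ?_
    ring
  have hmono : MonotoneOn f (Set.Ico (0:ℝ) 1) := by
    apply monotoneOn_of_deriv_nonneg (convex_Ico 0 1)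
    · intro u hu
      have hd : (0:ℝ) < 1 - u := by linarith [hu.2]
      apply ContinuousAt.continuousWithinAt
      have hlc : ContinuousAt (fun u : ℝ => Real.log (1 - u)) u :=
        (Real.continuousAt_log hd.ne').comp (by fun_prop)
      exact ContinuousAt.sub (by fun_prop) hlc
    · intro x hx
      rw [interior_Ico] at hx
      exact ((hder x hx).differentiableAt).differentiableWithinAt
    · intro x hx
      rw [interior_Ico] at hx
      rw [(hder x hx).deriv]
      have hd : (0:ℝ) < 1 - x := by linarith [hx.2]
      have h2 : 1 + x ≤ 1 / (1 - x) := by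
        rw [le_div_iff₀ hd]
        nlinarith [hx.1]
      linarith
  have h := hmono (Set.mem_Ico.2 ⟨le_rfl, one_pos⟩) (Set.mem_Ico.2 ⟨h0, h1⟩) h0
  have hf0 : f 0 = 0 := by simp [hf]
  rw [hf0, hf] at h
  simp only at h
  linarith

lemma jl_mgf_Q {m n : ℕ} [IsProbabilityMeasure μ] (hm : 0 < m) (hn : 0 < n)
    (M : Ω → Matrix (Fin m) (Fin n) ℝ)
    (hMmeas : ∀ i j, Measurable (fun ω => M ω i j))
    (hMindep : iIndepFun
      (fun (p : Fin m × Fin n) ω => M ω p.1 p.2) μ)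
    (hMgauss : ∀ i j, Measure.map (fun ω => M ω i j) μ = gaussianReal 0 (1 / (m : NNReal)))
    (c : Fin n → ℝ) (t : ℝ)
    (ht : 2 * t * ((∑ j, c j ^ 2) / m) < 1) :
    Integrable (fun ω => rexp (t * ∑ i, (∑ j, M ω i j * c j) ^ 2)) μ ∧
    mgf (fun ω => ∑ i, (∑ j, M ω i j * c j) ^ 2) μ t
      = ((Real.sqrt (1 - 2 * t * ((∑ j, c j ^ 2) / m)))⁻¹) ^ m := by
  have hr0 : 0 ≤ (Real.sqrt (1 - 2 * t * ((∑ j, c j ^ 2) / m)))⁻¹ := by positivity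
  have hlint : ∫⁻ ω, ENNReal.ofReal (rexp (t * ∑ i, (∑ j, M ω i j * c j) ^ 2)) ∂μ
      = (ENNReal.ofReal ((Real.sqrt (1 - 2 * t * ((∑ j, c j ^ 2) / m)))⁻¹)) ^ m := by
    rw [jl_factor M hMmeas hMindep c t Finset.univ]
    rw [Finset.prod_congr rfl (fun i _ => jl_row_mgf hm hn M hMmeas hMindep hMgauss c i t ht)]
    rw [Finset.prod_const, Finset.card_univ, Fintype.card_fin]
  have hmeasQ : Measurable (fun ω => ∑ i, (∑ j, M ω i j * c j) ^ 2) := by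
    apply Finset.measurable_sum
    intro i _
    apply Measurable.pow_const
    apply Finset.measurable_sum
    intro j _
    exact (hMmeas i j).mul_const _
  have hmeasE : Measurable (fun ω => rexp (t * ∑ i, (∑ j, M ω i j * c j) ^ 2)) := by
    fun_prop
  have hint : Integrable (fun ω => rexp (t * ∑ i, (∑ j, M ω i j * c j) ^ 2)) μ := by
    refine ⟨hmeasE.aestronglyMeasurable, ?_⟩
    have : ∫⁻ ω, (‖rexp (t * ∑ i, (∑ j, M ω i j * c j) ^ 2)‖₊ : ENNReal) ∂μ
        = ∫⁻ ω, ENNReal.ofReal (rexp (t * ∑ i, (∑ j, M ω i j * c j) ^ 2)) ∂μ := by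
      refine lintegral_congr fun ω => ?_
      rw [← Real.enorm_eq_ofReal (Real.exp_nonneg _), enorm_eq_nnnorm]
    rw [HasFiniteIntegral]
    simp_rw [enorm_eq_nnnorm]
    rw [this, hlint]
    exact ENNReal.pow_lt_top ENNReal.ofReal_lt_top
  refine ⟨hint, ?_⟩
  rw [mgf, integral_eq_lintegral_of_nonneg_ae (ae_of_all _ fun ω => Real.exp_nonneg _)
    hmeasE.aestronglyMeasurable, hlint, ENNReal.toReal_pow, ENNReal.toReal_ofReal hr0]


end JLAux

/-- Distributional Johnson–Lindenstrauss: for a random m×n matrix with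
i.i.d. N(0,1/m) entries, the squared distance ‖f(x)−f(y)‖² of a fixed pair
is (1±ε)-preserved except with probability at most 2 exp(−m(ε²/4 − ε³/6)). -/
theorem stmt_18 {Ω : Type*} [MeasurableSpace Ω]
    (μ : Measure Ω) [IsProbabilityMeasure μ]
    (m n : ℕ) (hm : 0 < m)
    (M : Ω → Matrix (Fin m) (Fin n) ℝ)
    (hmeas : ∀ i j, Measurable (fun ω => M ω i j))
    (hindep : iIndepFun
      (fun (p : Fin m × Fin n) ω => M ω p.1 p.2) μ)
    (hgauss : ∀ i j, Measure.map (fun ω => M ω i j) μ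
      = gaussianReal 0 (1 / (m : NNReal)))
    (x y : Fin n → ℝ) (ε : ℝ) (hε0 : 0 < ε) (hε1 : ε < 1) :
    μ {ω | ¬ ((1 - ε) * ∑ j, (x j - y j) ^ 2
              ≤ ∑ i, ((M ω).mulVec (x - y) i) ^ 2 ∧
            ∑ i, ((M ω).mulVec (x - y) i) ^ 2
              ≤ (1 + ε) * ∑ j, (x j - y j) ^ 2)}
      ≤ ENNReal.ofReal (2 * Real.exp (-(m * (ε ^ 2 / 4 - ε ^ 3 / 6)))) := by
  classical
  set c : Fin n → ℝ := fun j => x j - y j with hc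
  set S : ℝ := ∑ j, c j ^ 2 with hSdef
  have hmv : ∀ ω i, (M ω).mulVec (x - y) i = ∑ j, M ω i j * c j := by
    intro ω i
    simp [Matrix.mulVec, dotProduct, hc]
  have hRHS0 : (0:ℝ) ≤ 2 * Real.exp (-(m * (ε ^ 2 / 4 - ε ^ 3 / 6))) := by positivity
  by_cases hS : S = 0
  · have hzero : ∀ j, c j = 0 := by
      intro j
      have h := (Finset.sum_eq_zero_iff_of_nonneg
        (fun j _ => sq_nonneg (c j))).1 hS j (Finset.mem_univ j)
      exact pow_eq_zero_iff two_ne_zero |>.1 h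
    have hxy : x - y = 0 := by
      funext j
      exact hzero j
    have hsetempty : {ω : Ω | ¬ ((1 - ε) * ∑ j, (x j - y j) ^ 2
              ≤ ∑ i, ((M ω).mulVec (x - y) i) ^ 2 ∧
            ∑ i, ((M ω).mulVec (x - y) i) ^ 2
              ≤ (1 + ε) * ∑ j, (x j - y j) ^ 2)} = ∅ := by
      ext ω
      have h1 : ∑ j, (x j - y j) ^ 2 = 0 := hS
      simp [hxy, Matrix.mulVec_zero, h1]
    rw [hsetempty]
    simp
  · have hSpos : 0 < S :=
      lt_of_le_of_ne (Finset.sum_nonneg fun j _ => sq_nonneg _) (Ne.symm hS)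
    have hn : 0 < n := by
      rcases Nat.eq_zero_or_pos n with hn0 | hn
      · exact absurd (by subst hn0; simp [hSdef]) hS
      · exact hn
    have hmR : (0:ℝ) < m := Nat.cast_pos.2 hm
    set Q : Ω → ℝ := fun ω => ∑ i, (∑ j, M ω i j * c j) ^ 2 with hQ
    have hQrw : ∀ ω, ∑ i, ((M ω).mulVec (x - y) i) ^ 2 = Q ω := by
      intro ω
      rw [hQ]
      exact Finset.sum_congr rfl fun i _ => by rw [hmv]
    have hSrw : ∑ j, (x j - y j) ^ 2 = S := rfl
    -- upper tail
    set t₁ : ℝ := m * ε / (2 * (1 + ε) * S) with ht₁def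
    have ht₁0 : 0 ≤ t₁ := by positivity
    have hcond₁ : 2 * t₁ * (S / m) = ε / (1 + ε) := by
      rw [ht₁def]
      field_simp
    have hcond₁' : 2 * t₁ * (S / m) < 1 := by
      rw [hcond₁, div_lt_one (by linarith)]
      linarith
    obtain ⟨hint₁, hmgf₁⟩ := jl_mgf_Q hm hn M hmeas hindep hgauss c t₁ hcond₁'
    have hch₁ := measure_ge_le_exp_mul_mgf (X := Q) (μ := μ) ((1 + ε) * S) ht₁0 hint₁
    have hval₁ : 1 - 2 * t₁ * (S / m) = 1 / (1 + ε) := by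
      rw [hcond₁]
      field_simp
      ring
    have hmgf₁' : mgf Q μ t₁ = (Real.sqrt (1 + ε)) ^ m := by
      have h : mgf Q μ t₁ = (Real.sqrt (1 - 2 * t₁ * (S / m)))⁻¹ ^ m := hmgf₁
      rw [h, hval₁, one_div, Real.sqrt_inv, inv_inv]
    have hexp₁ : -t₁ * ((1 + ε) * S) = -(m * ε / 2) := by
      rw [ht₁def]
      field_simp
    rw [hexp₁, hmgf₁'] at hch₁
    have hb₁ : Real.exp (-(m * ε / 2)) * (Real.sqrt (1 + ε)) ^ m
        ≤ Real.exp (-(m * (ε ^ 2 / 4 - ε ^ 3 / 6))) := by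
      have hsq : Real.sqrt (1 + ε) = Real.exp (Real.log (1 + ε) / 2) := by
        rw [Real.sqrt_eq_rpow, Real.rpow_def_of_pos (by linarith)]
        ring_nf
      rw [hsq, ← Real.exp_nat_mul, ← Real.exp_add]
      apply Real.exp_le_exp.2
      have hlog := jl_log_ineq1 hε0.le
      have hmul := mul_le_mul_of_nonneg_left hlog (by positivity : (0:ℝ) ≤ (m:ℝ) / 2)
      linarith [hmul]
    -- lower tail
    set t₂ : ℝ := -(m * ε / (2 * (1 - ε) * S)) with ht₂def
    have h1ε : (0:ℝ) < 1 - ε := by linarith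
    have ht₂0 : t₂ ≤ 0 := by
      rw [ht₂def, neg_nonpos]
      positivity
    have hcond₂ : 2 * t₂ * (S / m) = -(ε / (1 - ε)) := by
      rw [ht₂def]
      field_simp
    have hcond₂' : 2 * t₂ * (S / m) < 1 := by
      rw [hcond₂]
      have : 0 < ε / (1 - ε) := by positivity
      linarith
    obtain ⟨hint₂, hmgf₂⟩ := jl_mgf_Q hm hn M hmeas hindep hgauss c t₂ hcond₂'
    have hch₂ := measure_le_le_exp_mul_mgf (X := Q) (μ := μ) ((1 - ε) * S) ht₂0 hint₂
    have hval₂ : 1 - 2 * t₂ * (S / m) = 1 / (1 - ε) := by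
      rw [hcond₂, sub_neg_eq_add]
      field_simp
      ring
    have hmgf₂' : mgf Q μ t₂ = (Real.sqrt (1 - ε)) ^ m := by
      have h : mgf Q μ t₂ = (Real.sqrt (1 - 2 * t₂ * (S / m)))⁻¹ ^ m := hmgf₂
      rw [h, hval₂, one_div, Real.sqrt_inv, inv_inv]
    have hexp₂ : -t₂ * ((1 - ε) * S) = m * ε / 2 := by
      rw [ht₂def]
      field_simp
    rw [hexp₂, hmgf₂'] at hch₂
    have hb₂ : Real.exp (m * ε / 2) * (Real.sqrt (1 - ε)) ^ m
        ≤ Real.exp (-(m * (ε ^ 2 / 4 - ε ^ 3 / 6))) := by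
      have hsq : Real.sqrt (1 - ε) = Real.exp (Real.log (1 - ε) / 2) := by
        rw [Real.sqrt_eq_rpow, Real.rpow_def_of_pos h1ε]
        ring_nf
      rw [hsq, ← Real.exp_nat_mul, ← Real.exp_add]
      apply Real.exp_le_exp.2
      have hlog := jl_log_ineq2 hε0.le hε1
      have hmul := mul_le_mul_of_nonneg_left hlog (by positivity : (0:ℝ) ≤ (m:ℝ) / 2)
      have h3 : (0:ℝ) ≤ (m:ℝ) * ε ^ 3 := by positivity
      linarith [hmul, h3]
    -- combine
    have hsub : {ω : Ω | ¬ ((1 - ε) * ∑ j, (x j - y j) ^ 2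
              ≤ ∑ i, ((M ω).mulVec (x - y) i) ^ 2 ∧
            ∑ i, ((M ω).mulVec (x - y) i) ^ 2
              ≤ (1 + ε) * ∑ j, (x j - y j) ^ 2)}
        ⊆ {ω | (1 + ε) * S ≤ Q ω} ∪ {ω | Q ω ≤ (1 - ε) * S} := by
      intro ω hω
      simp only [Set.mem_setOf_eq, not_and_or, not_le] at hω
      rcases hω with h | h
      · right
        rw [Set.mem_setOf_eq, ← hQrw ω, ← hSrw]
        exact le_of_lt h
      · left
        rw [Set.mem_setOf_eq, ← hQrw ω, ← hSrw]
        exact le_of_lt h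
    refine le_trans (measure_mono hsub) (le_trans (measure_union_le _ _) ?_)
    calc μ {ω | (1 + ε) * S ≤ Q ω} + μ {ω | Q ω ≤ (1 - ε) * S}
        = ENNReal.ofReal (μ {ω | (1 + ε) * S ≤ Q ω}).toReal
            + ENNReal.ofReal (μ {ω | Q ω ≤ (1 - ε) * S}).toReal := by
          rw [ENNReal.ofReal_toReal (measure_ne_top _ _),
            ENNReal.ofReal_toReal (measure_ne_top _ _)]
      _ ≤ ENNReal.ofReal (Real.exp (-(m * (ε ^ 2 / 4 - ε ^ 3 / 6))))
            + ENNReal.ofReal (Real.exp (-(m * (ε ^ 2 / 4 - ε ^ 3 / 6)))) :=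
          add_le_add (ENNReal.ofReal_le_ofReal (le_trans hch₁ hb₁))
            (ENNReal.ofReal_le_ofReal (le_trans hch₂ hb₂))
      _ = ENNReal.ofReal (2 * Real.exp (-(m * (ε ^ 2 / 4 - ε ^ 3 / 6)))) := by
          rw [← ENNReal.ofReal_add (Real.exp_nonneg _) (Real.exp_nonneg _)]
          congr 1
          ring
end

section
/- In a finite MDP, for arbitrary policies π and π', the performance difference identity holds: J_R(π') − J_R(π) = (1/(1-γ)) E_{s∼d^{π'}, a∼π'}[A_R^π(s,a)], where A_R^π(s,a) = Q_R^π(s,a) − V_R^π(s) is the advantage function. -/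
/-- Performance difference lemma (Kakade–Langford):
J_R(π') − J_R(π) = (1/(1-γ)) E_{s∼d^{π'}, a∼π'}[A_R^π(s,a)]. -/
theorem stmt_19 {S A : Type*} [Fintype S] [Fintype A]
    (γ : ℝ) (hγ0 : 0 < γ) (hγ1 : γ < 1)
    (ρ : S → ℝ) (hρ0 : ∀ s, 0 ≤ ρ s) (hρ1 : ∑ s, ρ s = 1)
    (P : S → A → S → ℝ) (hP0 : ∀ s a s', 0 ≤ P s a s')
    (hP1 : ∀ s a, ∑ s', P s a s' = 1)
    (R : S → A → ℝ)
    (π π' : S → A → ℝ)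
    (hπ0 : ∀ s a, 0 ≤ π s a) (hπ1 : ∀ s, ∑ a, π s a = 1)
    (hπ'0 : ∀ s a, 0 ≤ π' s a) (hπ'1 : ∀ s, ∑ a, π' s a = 1)
    -- value functions of π and π'
    (V V' : S → ℝ)
    (hV : ∀ s, V s = ∑ a, π s a * (R s a + γ * ∑ s', P s a s' * V s'))
    (hV' : ∀ s, V' s = ∑ a, π' s a * (R s a + γ * ∑ s', P s a s' * V' s'))
    -- action-value function of π
    (Qf : S → A → ℝ)
    (hQ : ∀ s a, Qf s a = R s a + γ * ∑ s', P s a s' * V s')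
    -- discounted visitation distribution of π'
    (d' : S → ℝ) (hd'0 : ∀ s, 0 ≤ d' s)
    (hd' : ∀ t, d' t - γ * ∑ s, ∑ a, d' s * π' s a * P s a t
      = (1 - γ) * ρ t) :
    (∑ s, ρ s * V' s) - ∑ s, ρ s * V s
      = (1 / (1 - γ)) * ∑ s, d' s * ∑ a, π' s a * (Qf s a - V s) := by
  have hne : (1 : ℝ) - γ ≠ 0 := by linarith
  set Δ : S → ℝ := fun s => V' s - V s with hΔ
  have hg : ∀ s, ∑ a, π' s a * (Qf s a - V s)
      = Δ s - γ * ∑ a, π' s a * ∑ s', P s a s' * Δ s' := by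
    intro s
    have e1 : ∑ a, π' s a * (Qf s a - V s)
        = (∑ a, π' s a * (R s a + γ * ∑ s', P s a s' * V s')) - V s := by
      simp only [hQ, mul_sub, Finset.sum_sub_distrib, ← Finset.sum_mul, hπ'1 s, one_mul]
    have e2 : ∑ a, π' s a * ∑ s', P s a s' * Δ s'
        = (∑ a, π' s a * ∑ s', P s a s' * V' s')
          - ∑ a, π' s a * ∑ s', P s a s' * V s' := by
      simp only [hΔ, mul_sub, Finset.sum_sub_distrib, Finset.mul_sum]
    have key : ∀ (X Y : A → ℝ),
        (∑ a, π' s a * (R s a + γ * X a)) - ∑ a, π' s a * (R s a + γ * Y a)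
          = γ * ∑ a, π' s a * X a - γ * ∑ a, π' s a * Y a := by
      intro X Y
      rw [← Finset.sum_sub_distrib, Finset.mul_sum, Finset.mul_sum,
        ← Finset.sum_sub_distrib]
      exact Finset.sum_congr rfl fun a _ => by ring
    have hV's := hV' s
    have hk := key (fun a => ∑ s', P s a s' * V s') (fun a => ∑ s', P s a s' * V' s')
    rw [e1, e2]
    simp only [hΔ]
    rw [hV' s]
    linarith [hk]
  have swap : ∑ s, ∑ a, ∑ t, d' s * π' s a * P s a t * Δ t
      = ∑ t, (∑ s, ∑ a, d' s * π' s a * P s a t) * Δ t := by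
    have h1 : ∀ s : S, ∑ a, ∑ t, d' s * π' s a * P s a t * Δ t
        = ∑ t, ∑ a, d' s * π' s a * P s a t * Δ t := fun s => by rw [Finset.sum_comm]
    simp only [h1]
    rw [Finset.sum_comm]
    refine Finset.sum_congr rfl fun t _ => ?_
    rw [Finset.sum_mul]
    refine Finset.sum_congr rfl fun s _ => ?_
    rw [Finset.sum_mul]
  have main : ∑ s, d' s * ∑ a, π' s a * (Qf s a - V s) = (1 - γ) * ∑ s, ρ s * Δ s := by
    calc ∑ s, d' s * ∑ a, π' s a * (Qf s a - V s)
        = ∑ s, d' s * (Δ s - γ * ∑ a, π' s a * ∑ t, P s a t * Δ t) := by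
          refine Finset.sum_congr rfl fun s _ => by rw [hg s]
      _ = ∑ s, d' s * Δ s - γ * ∑ s, ∑ a, ∑ t, d' s * π' s a * P s a t * Δ t := by
          simp only [Finset.mul_sum, mul_sub]
          rw [← Finset.sum_sub_distrib]
          refine Finset.sum_congr rfl fun s _ => ?_
          congr 1
          refine Finset.sum_congr rfl fun a _ => ?_
          refine Finset.sum_congr rfl fun t _ => by ring
      _ = ∑ t, (d' t - γ * ∑ s, ∑ a, d' s * π' s a * P s a t) * Δ t := by
          rw [swap, Finset.mul_sum, ← Finset.sum_sub_distrib]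
          refine Finset.sum_congr rfl fun t _ => by ring
      _ = ∑ t, (1 - γ) * (ρ t * Δ t) := by
          refine Finset.sum_congr rfl fun t _ => by rw [hd' t]; ring
      _ = (1 - γ) * ∑ s, ρ s * Δ s := by rw [← Finset.mul_sum]
  have lhs : (∑ s, ρ s * V' s) - ∑ s, ρ s * V s = ∑ s, ρ s * Δ s := by
    rw [← Finset.sum_sub_distrib]
    exact Finset.sum_congr rfl fun s _ => by simp [hΔ, mul_sub]
  rw [lhs, main]
  field_simp
end
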